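/- For all integers r ≥ 1 and m ≥ 0, Σ_{(j_1,…,j_r) ∈ J_{r,m}} ( ∏_{k=1}^{r} j_k ) = (m+1)_{2r} / (2^r · r!), where (x)_t = x(x−1)⋯(x−t+1) is the falling factorial. -/

import Mathlib

/-- `J_{r,m}`: the set of `r`-tuples `1 ≤ j_1 < … < j_r ≤ m` with
`j_k ≤ j_{k+1} - 2` for all `k`. -/
def Jset (r m : ℕ) : Finset (Fin r → ℕ) :=
  (Fintype.piFinset (fun _ : Fin r => Finset.Icc 1 m)).filter
    (fun j => ∀ k l : Fin r, k < l → j k + 2 ≤ j l)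

lemma mem_Jset {r m : ℕ} {j : Fin r → ℕ} :
    j ∈ Jset r m ↔ (∀ k, 1 ≤ j k ∧ j k ≤ m) ∧ ∀ k l : Fin r, k < l → j k + 2 ≤ j l := by
  simp [Jset, Finset.mem_Icc, forall_and]

lemma desc_rec (n k : ℕ) :
    (n + 1).descFactorial (k + 1) = n.descFactorial (k + 1) + (k + 1) * n.descFactorial k := by
  rcases le_or_gt k n with h | h
  · rw [Nat.succ_descFactorial_succ, Nat.descFactorial_succ]
    have hn : n + 1 = (n - k) + (k + 1) := by omega
    rw [hn, add_mul]
  · rw [Nat.descFactorial_eq_zero_iff_lt.mpr h,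
      Nat.descFactorial_eq_zero_iff_lt.mpr (by omega : n < k + 1),
      Nat.succ_descFactorial_succ, Nat.descFactorial_eq_zero_iff_lt.mpr h]
    ring

lemma sum_rec (r m : ℕ) :
    ∑ j ∈ Jset (r + 1) (m + 2), ∏ k : Fin (r + 1), (j k : ℝ)
      = (∑ j ∈ Jset (r + 1) (m + 1), ∏ k : Fin (r + 1), (j k : ℝ))
        + (m + 2) * ∑ j ∈ Jset r m, ∏ k : Fin r, (j k : ℝ) := by
  have h1 : (Jset (r + 1) (m + 2)).filter (fun j => ¬ j (Fin.last r) = m + 2)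
      = Jset (r + 1) (m + 1) := by
    ext j
    simp only [Finset.mem_filter, mem_Jset]
    constructor
    · rintro ⟨⟨hb, hg⟩, hne⟩
      refine ⟨fun k => ⟨(hb k).1, ?_⟩, hg⟩
      rcases lt_or_eq_of_le (Fin.le_last k) with hk | hk
      · have := hg k _ hk
        have := (hb (Fin.last r)).2
        omega
      · rw [hk]
        have := (hb (Fin.last r)).2
        omega
    · rintro ⟨hb, hg⟩
      exact ⟨⟨fun k => ⟨(hb k).1, (hb k).2.trans (by omega)⟩, hg⟩,
        by have := (hb (Fin.last r)).2; omega⟩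
  have h2 : ∑ j ∈ (Jset (r + 1) (m + 2)).filter (fun j => j (Fin.last r) = m + 2),
      ∏ k : Fin (r + 1), (j k : ℝ)
      = (m + 2) * ∑ j ∈ Jset r m, ∏ k : Fin r, (j k : ℝ) := by
    rw [Finset.mul_sum]
    refine Finset.sum_bij' (fun j _ => j ∘ Fin.castSucc)
      (fun j' _ => Fin.snoc j' (m + 2)) ?_ ?_ ?_ ?_ ?_
    · intro j hj
      rw [Finset.mem_filter, mem_Jset] at hj
      obtain ⟨⟨hb, hg⟩, hl⟩ := hj
      rw [mem_Jset]
      simp only [Function.comp_apply]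
      refine ⟨fun k => ⟨(hb _).1, ?_⟩, fun k l hkl => hg _ _ (by simpa using hkl)⟩
      have := hg (Fin.castSucc k) (Fin.last r) (Fin.castSucc_lt_last k)
      omega
    · intro j' hj'
      rw [mem_Jset] at hj'
      obtain ⟨hb, hg⟩ := hj'
      rw [Finset.mem_filter, mem_Jset]
      refine ⟨⟨fun k => ?_, fun k l hkl => ?_⟩, by simp⟩
      · induction k using Fin.lastCases with
        | last => simp
        | cast i => simpa using ⟨(hb i).1, (hb i).2.trans (by omega)⟩
      · induction l using Fin.lastCases with
        | last =>
          induction k using Fin.lastCases with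
          | last => exact absurd hkl (lt_irrefl _)
          | cast i => simpa using by have := (hb i).2; omega
        | cast li =>
          induction k using Fin.lastCases with
          | last => exact absurd (hkl.trans (Fin.castSucc_lt_last li)) (lt_irrefl _)
          | cast ki => simpa using hg ki li (by simpa using hkl)
    · intro j hj
      rw [Finset.mem_filter] at hj
      funext k
      induction k using Fin.lastCases with
      | last => simpa using hj.2.symm
      | cast i => simp
    · intro j' _
      funext k
      simp
    · intro j hj
      rw [Finset.mem_filter] at hj
      simp only [Function.comp_apply]
      rw [Fin.prod_univ_castSucc, hj.2]
      push_cast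
      ring
  rw [← Finset.sum_filter_add_sum_filter_not (Jset (r + 1) (m + 2))
    (fun j => j (Fin.last r) = m + 2), h1, h2]
  ring

lemma main_aux : ∀ r m : ℕ, ∑ j ∈ Jset r m, ∏ k : Fin r, (j k : ℝ)
    = ((m + 1).descFactorial (2 * r) : ℝ) / (2 ^ r * (r.factorial : ℝ)) := by
  intro r
  induction r with
  | zero =>
    intro m
    simp [Jset]
  | succ r ih =>
    intro m
    induction m using Nat.strong_induction_on with
    | _ m ihm =>
      rcases m with _ | _ | m
      · have he : Jset (r + 1) 0 = ∅ := by
          ext j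
          simp only [mem_Jset, Finset.notMem_empty, iff_false, not_and]
          intro hb _
          have := hb 0
          omega
        rw [he]
        rw [Nat.descFactorial_eq_zero_iff_lt.mpr (by omega : 0 + 1 < 2 * (r + 1))]
        simp
      · rcases r with _ | r
        · have he : Jset 1 1 = {fun _ => 1} := by
            ext j
            simp only [mem_Jset, Finset.mem_singleton]
            constructor
            · rintro ⟨hb, -⟩
              funext k
              have := hb k
              omega
            · rintro rfl
              refine ⟨fun k => ⟨le_refl _, le_refl _⟩, fun k l h => ?_⟩
              rw [Fin.lt_def] at h
              have := k.isLt
              have := l.isLt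
              omega
          rw [he]
          norm_num [Nat.descFactorial]
        · have he : Jset (r + 1 + 1) 1 = ∅ := by
            ext j
            simp only [mem_Jset, Finset.notMem_empty, iff_false, not_and]
            intro hb hg
            have h01 : (0 : Fin (r + 1 + 1)) < 1 := by
              rw [Fin.lt_def]
              simp [Fin.val_one]
            have := hg 0 1 h01
            have := hb 0
            have := hb 1
            omega
          rw [he]
          rw [Nat.descFactorial_eq_zero_iff_lt.mpr (by omega : 1 + 1 < 2 * (r + 1 + 1))]
          simp
      · rw [sum_rec, ihm (m + 1) (by omega), ih m]
        have hnat : (m + 2 + 1).descFactorial (2 * (r + 1))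
            = (m + 1 + 1).descFactorial (2 * (r + 1))
              + (2 * r + 2) * ((m + 2) * (m + 1).descFactorial (2 * r)) := by
          have h1 := desc_rec (m + 2) (2 * r + 1)
          have h2 := Nat.succ_descFactorial_succ (m + 1) (2 * r)
          have e : 2 * (r + 1) = 2 * r + 1 + 1 := by ring
          rw [e]
          rw [h1, h2]
        rw [hnat]
        have hf : (r.factorial : ℝ) ≠ 0 := Nat.cast_ne_zero.mpr r.factorial_ne_zero
        have h2r : (2 : ℝ) ^ r ≠ 0 := by positivity
        rw [Nat.factorial_succ]
        push_cast
        field_simp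
        ring


/-- Lemma (`LA`): `Σ_{J_{r,m}} ∏_k j_k = (m+1)_{2r} / (2^r r!)`, where `(x)_t`
is the falling factorial. -/
theorem stmt5 (r m : ℕ) (hr : 1 ≤ r) :
    ∑ j ∈ Jset r m, ∏ k : Fin r, (j k : ℝ)
      = ((m + 1).descFactorial (2 * r) : ℝ) / (2 ^ r * (r.factorial : ℝ)) := by
  exact main_aux r m
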